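/- Let R be a discrete valuation ring with fraction field Q, let A be a commutative R-algebra, and let G be a finite group acting on A by R-algebra automorphisms, with fixed subring A^G. Endow A ⊗_R Q with the G-action given by g ⊗ id. Then the canonical Q-algebra homomorphism A^G ⊗_R Q → (A ⊗_R Q)^G is an isomorphism; i.e., taking fixed rings under a finite group commutes with base change to the fraction field. -/

import Mathlib

open TensorProduct

set_option synthInstance.maxHeartbeats 800000
set_option maxHeartbeats 1600000

/-- The fixed subalgebra `A^G` of an action of a group `G` on a commutative `R`-algebra `A`
by `R`-algebra automorphisms, given by `ρ : G →* (A ≃ₐ[R] A)`. -/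
def fixedSubalgebra {R A : Type*} [CommRing R] [CommRing A] [Algebra R A]
    {G : Type*} [Group G] (ρ : G →* (A ≃ₐ[R] A)) : Subalgebra R A where
  carrier := {a | ∀ g : G, ρ g a = a}
  mul_mem' := by intro a b ha hb g; rw [map_mul, ha g, hb g]
  add_mem' := by intro a b ha hb g; rw [map_add, ha g, hb g]
  algebraMap_mem' := by intro r g; rw [AlgEquiv.commutes]

/-- Let `R` be a discrete valuation ring with fraction field `Q`, let `A` be a
commutative `R`-algebra and let a finite group `G` act on `A` by `R`-algebra automorphisms.
Endow `A ⊗[R] Q` with the `G`-action `g ⊗ id`. Then the canonical algebra homomorphism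
`A^G ⊗[R] Q → A ⊗[R] Q` is injective with image exactly the fixed points `(A ⊗[R] Q)^G`;
i.e. `A^G ⊗[R] Q → (A ⊗[R] Q)^G` is an isomorphism. -/
theorem fixedPoints_tensor_fractionField
    {R : Type*} [CommRing R] [IsDomain R] [IsDiscreteValuationRing R]
    (Q : Type*) [Field Q] [Algebra R Q] [IsFractionRing R Q]
    {A : Type*} [CommRing A] [Algebra R A]
    {G : Type*} [Group G] [Finite G] (ρ : G →* (A ≃ₐ[R] A)) :
    Function.Injective
      (Algebra.TensorProduct.map (fixedSubalgebra ρ).val (AlgHom.id R Q)) ∧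
    ∀ x : A ⊗[R] Q,
      (x ∈ Set.range (Algebra.TensorProduct.map (fixedSubalgebra ρ).val (AlgHom.id R Q)) ↔
        ∀ g : G, Algebra.TensorProduct.map (ρ g).toAlgHom (AlgHom.id R Q) x = x) := by
  classical
  have := Fintype.ofFinite G
  set S : Submonoid R := nonZeroDivisors R with hS
  -- the canonical map `A → A ⊗ Q` is a localized module map
  let f₀ : A →ₗ[R] Q ⊗[R] A := TensorProduct.mk R Q A 1
  have h₀ : IsLocalizedModule S f₀ :=
    (isLocalizedModule_iff_isBaseChange S Q f₀).mpr (TensorProduct.isBaseChange R A Q)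
  let e : Q ⊗[R] A ≃ₗ[R] A ⊗[R] Q := TensorProduct.comm R Q A
  let f : A →ₗ[R] A ⊗[R] Q := (e : Q ⊗[R] A →ₗ[R] A ⊗[R] Q) ∘ₗ f₀
  have hf : IsLocalizedModule S f := IsLocalizedModule.of_linearEquiv S f₀ e
  have hfa : ∀ a : A, f a = a ⊗ₜ[R] (1 : Q) := fun a => rfl
  constructor
  · -- injectivity via flatness of `Q`
    have hflat : Module.Flat R Q := IsLocalization.flat Q (nonZeroDivisors R)
    have key : Function.Injective
        (LinearMap.rTensor Q (fixedSubalgebra ρ).val.toLinearMap) :=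
      Module.Flat.rTensor_preserves_injective_linearMap _ Subtype.val_injective
    have heq : (Algebra.TensorProduct.map (fixedSubalgebra ρ).val (AlgHom.id R Q) :
        (fixedSubalgebra ρ) ⊗[R] Q → A ⊗[R] Q) =
        (LinearMap.rTensor Q (fixedSubalgebra ρ).val.toLinearMap : _ → _) := by
      funext x
      induction x with
      | zero => rw [map_zero, map_zero]
      | tmul b q => simp [LinearMap.rTensor]
      | add x y hx hy => rw [map_add, map_add, hx, hy]
    rw [heq]
    exact key
  · intro x
    constructor
    · -- elements coming from `A^G ⊗ Q` are fixed
      rintro ⟨y, rfl⟩ g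
      induction y with
      | zero => rw [map_zero, map_zero]
      | tmul b q =>
        simp only [Algebra.TensorProduct.map_tmul, Subalgebra.coe_val, AlgHom.coe_id, id_eq,
          AlgEquiv.toAlgHom_eq_coe, AlgHom.coe_coe]
        exact congrArg (· ⊗ₜ[R] q) (b.2 g)
      | add y z hy hz =>
        rw [map_add, map_add, hy, hz]
    · -- fixed elements come from `A^G ⊗ Q`
      intro hx
      obtain ⟨⟨a, s⟩, rfl⟩ := IsLocalizedModule.mk'_surjective S f x
      simp only [Function.uncurry] at hx ⊢
      -- for each `g`, `ρ g a - a` is killed by some `t g ∈ S`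
      have hfix : ∀ g : G, ∃ t : S, (t : R) • (ρ g a) = (t : R) • a := by
        intro g
        have h1 : (s : R) • IsLocalizedModule.mk' f a s = f a := by
          rw [← Submonoid.smul_def]; exact IsLocalizedModule.mk'_cancel' f a s
        have h2 : f (ρ g a) = f a :=
          calc f (ρ g a)
              = (Algebra.TensorProduct.map (ρ g).toAlgHom (AlgHom.id R Q)) (f a) := by
                rw [hfa, hfa]
                simp
            _ = (s : R) • (Algebra.TensorProduct.map (ρ g).toAlgHom (AlgHom.id R Q))
                  (IsLocalizedModule.mk' f a s) := by
                rw [← map_smul, h1]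
            _ = (s : R) • IsLocalizedModule.mk' f a s := by rw [hx g]
            _ = f a := h1
        have h3 : f (ρ g a - a) = 0 := by rw [map_sub, h2, sub_self]
        obtain ⟨t, ht⟩ := (IsLocalizedModule.eq_zero_iff S f).mp h3
        exact ⟨t, by rw [← sub_eq_zero, ← smul_sub]; exact ht⟩
      choose t ht using hfix
      let T : S := ∏ g : G, t g
      have hTg : ∀ g : G, (T : R) • (ρ g a) = (T : R) • a := by
        intro g
        have hsplit : (T : R) = (∏ h ∈ Finset.univ.erase g, (t h : R)) * (t g : R) := by
          rw [show (T : R) = ∏ g : G, (t g : R) from SubmonoidClass.coe_finset_prod t Finset.univ,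
            ← Finset.prod_erase_mul Finset.univ (fun h => (t h : R)) (Finset.mem_univ g)]
        rw [hsplit, mul_smul, mul_smul, ht g]
      -- the invariant element
      have hbfix : (T : R) • a ∈ fixedSubalgebra ρ := by
        intro g
        rw [map_smul, hTg g]
      -- the denominator is invertible in `Q`
      have hne : algebraMap R Q ((T : R) * (s : R)) ≠ 0 := by
        have hne0 : ((T : R) * (s : R)) ≠ 0 :=
          mul_ne_zero (nonZeroDivisors.coe_ne_zero T) (nonZeroDivisors.coe_ne_zero s)
        simp only [ne_eq, IsFractionRing.to_map_eq_zero_iff (K := Q)]; exact hne0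
      refine ⟨(⟨(T : R) • a, hbfix⟩ : fixedSubalgebra ρ)
        ⊗ₜ[R] (algebraMap R Q ((T : R) * (s : R)))⁻¹, ?_⟩
      rw [Algebra.TensorProduct.map_tmul]
      simp only [Subalgebra.coe_val, AlgHom.coe_id, id_eq]
      have hone : ((T : R) * (s : R)) • (algebraMap R Q ((T : R) * (s : R)))⁻¹ = (1 : Q) := by
        rw [Algebra.smul_def, mul_inv_cancel₀ hne]
      have hsm : ((T * s : S) • (((T : R) • a) ⊗ₜ[R]
            (algebraMap R Q ((T : R) * (s : R)))⁻¹) : A ⊗[R] Q) =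
          ((T : R) • a) ⊗ₜ[R] (((T : R) * (s : R)) • (algebraMap R Q ((T : R) * (s : R)))⁻¹) := by
        rw [TensorProduct.tmul_smul, Submonoid.smul_def, Submonoid.coe_mul]
      symm
      rw [← IsLocalizedModule.mk'_cancel_left f a T s, IsLocalizedModule.mk'_eq_iff, hsm, hone,
        hfa, Submonoid.smul_def]
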